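/- Let E_1, …, E_m be Banach lattices and let F be a Banach space. The set of all M-weakly compact m-linear operators, that is, all continuous m-linear operators A : E_1 × ⋯ × E_m → F sending norm bounded disjoint sequences in E_1 × ⋯ × E_m (with the coordinatewise order) to norm null sequences in F, is a closed linear subspace of L(E_1,…,E_m;F). -/

import Mathlib

open Filter Topology Bornology

/-- The set of M-weakly compact `m`-linear operators from Banach lattices `E₁, …, E_m` to a
Banach space `F`: operators sending norm bounded disjoint sequences in `E₁ × ⋯ × E_m`
(coordinatewise order, maximum norm) to norm null sequences in `F`. -/
def MWeaklyCompactMultilinear {m : ℕ} (E : Fin m → Type*) (F : Type*)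
    [∀ i, NormedAddCommGroup (E i)] [∀ i, Lattice (E i)]
    [∀ i, IsOrderedAddMonoid (E i)] [∀ i, HasSolidNorm (E i)] [∀ i, NormedSpace ℝ (E i)]
    [NormedAddCommGroup F] [NormedSpace ℝ F] :
    Set (ContinuousMultilinearMap ℝ E F) :=
  {A | ∀ x : ℕ → ∀ i, E i, IsBounded (Set.range x) →
    (∀ j k, j ≠ k → |x j| ⊓ |x k| = 0) →
    Tendsto (fun n => ‖A (x n)‖) atTop (nhds 0)}

/-- For Banach lattices `E₁, …, E_m` and a Banach space `F`, the set of M-weakly compact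
`m`-linear operators is a closed linear subspace of `L(E₁,…,E_m;F)`. -/
theorem stmt8 {m : ℕ} (E : Fin m → Type*) (F : Type*)
    [∀ i, NormedAddCommGroup (E i)] [∀ i, Lattice (E i)]
    [∀ i, IsOrderedAddMonoid (E i)] [∀ i, HasSolidNorm (E i)] [∀ i, NormedSpace ℝ (E i)]
    [∀ i, CompleteSpace (E i)]
    [NormedAddCommGroup F] [NormedSpace ℝ F] [CompleteSpace F] :
    IsClosed (MWeaklyCompactMultilinear E F) ∧
      (0 : ContinuousMultilinearMap ℝ E F) ∈ MWeaklyCompactMultilinear E F ∧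
      (∀ A₁ ∈ MWeaklyCompactMultilinear E F, ∀ A₂ ∈ MWeaklyCompactMultilinear E F,
        A₁ + A₂ ∈ MWeaklyCompactMultilinear E F) ∧
      (∀ (c : ℝ), ∀ A ∈ MWeaklyCompactMultilinear E F,
        c • A ∈ MWeaklyCompactMultilinear E F) := by
  refine ⟨?_, ?_, ?_, ?_⟩
  · -- closedness
    apply IsSeqClosed.isClosed
    intro As A hAs hlim x hx hdisj
    obtain ⟨C0, hC0⟩ := (isBounded_iff_forall_norm_le).mp hx
    set C : ℝ := max C0 0 with hC
    have hCnn : 0 ≤ C := le_max_right _ _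
    have hxC : ∀ n i, ‖x n i‖ ≤ C := by
      intro n i
      have h1 : ‖x n‖ ≤ C0 := hC0 _ ⟨n, rfl⟩
      have h2 : ‖x n i‖ ≤ ‖x n‖ := norm_le_pi_norm (x n) i
      exact h2.trans (h1.trans (le_max_left _ _))
    have hprod : ∀ n, ∏ i, ‖x n i‖ ≤ C ^ m := by
      intro n
      calc ∏ i, ‖x n i‖ ≤ ∏ _i : Fin m, C :=
            Finset.prod_le_prod (fun i _ => norm_nonneg _) (fun i _ => hxC n i)
        _ = C ^ m := by simp
    rw [Metric.tendsto_atTop]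
    intro ε hε
    have hCm : (0:ℝ) < C ^ m + 1 := by positivity
    obtain ⟨k, hk⟩ := (Metric.tendsto_atTop.mp hlim) (ε / (2 * (C ^ m + 1)))
      (by positivity)
    have hAk : ‖A - As k‖ < ε / (2 * (C ^ m + 1)) := by
      have := hk k le_rfl
      rw [dist_eq_norm] at this
      rwa [norm_sub_rev]
    obtain ⟨N, hN⟩ := (Metric.tendsto_atTop.mp (hAs k x hx hdisj)) (ε / 2) (by positivity)
    refine ⟨N, fun n hn => ?_⟩
    have h1 : ‖A (x n)‖ ≤ ‖(A - As k) (x n)‖ + ‖(As k) (x n)‖ := by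
      have : A (x n) = (A - As k) (x n) + (As k) (x n) := by
        simp [ContinuousMultilinearMap.sub_apply]
      rw [this]; exact norm_add_le _ _
    have h2 : ‖(A - As k) (x n)‖ ≤ ‖A - As k‖ * ∏ i, ‖x n i‖ :=
      ContinuousMultilinearMap.le_opNorm _ _
    have h3 : ‖A - As k‖ * ∏ i, ‖x n i‖ ≤ ε / 2 := by
      have hp : ∏ i, ‖x n i‖ ≤ C ^ m + 1 := (hprod n).trans (by linarith)
      have hpnn : (0:ℝ) ≤ ∏ i, ‖x n i‖ := Finset.prod_nonneg (fun i _ => norm_nonneg _)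
      calc ‖A - As k‖ * ∏ i, ‖x n i‖ ≤ (ε / (2 * (C ^ m + 1))) * (C ^ m + 1) :=
            mul_le_mul hAk.le hp hpnn (by positivity)
        _ = ε / 2 := by field_simp
    have h4 : ‖(As k) (x n)‖ < ε / 2 := by
      have := hN n hn
      rwa [Real.dist_eq, sub_zero, abs_of_nonneg (norm_nonneg _)] at this
    rw [Real.dist_eq, sub_zero, abs_of_nonneg (norm_nonneg _)]
    linarith
  · intro x hx hd; simp
  · intro A₁ h₁ A₂ h₂ x hx hd
    have := (h₁ x hx hd).add (h₂ x hx hd)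
    rw [add_zero] at this
    refine squeeze_zero (fun n => norm_nonneg _) (fun n => ?_) this
    simpa using norm_add_le (A₁ (x n)) (A₂ (x n))
  · intro c A hA x hx hd
    have := (hA x hx hd).const_mul |c|
    rw [mul_zero] at this
    refine squeeze_zero (fun n => norm_nonneg _) (fun n => ?_) this
    simp [norm_smul]
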